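/- In Y_d(n, p_n) with p_n = n^{−α} and 0 < α < 1/2, let σ₁ ∼ σ₂ and σ₃ ∼ σ₄ be two edges of (d−1)-simplexes, S = {σ ∈ X_{d−1} : σ ∼ σᵢ for i = 1,2,3,4}, and Z = 1{σ₁∼σ₃, σ₁∼σ₄} + 1{σ₂∼σ₃, σ₂∼σ₄}. Then for all large n, P(W_{σ₁,σ₂} − |S| − Z ≤ (1/2) n p_n²) ≤ exp(−Θ(n^{1−2α})). -/

import Mathlib

open MeasureTheory Finset
open scoped ENNReal

/-- The Linial–Meshulam measure `Y_d(n,p)`. -/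
noncomputable def linialMeshulam (n : ℕ) (p : ℝ≥0∞) :
    Measure (Finset (Fin n) → Bool) :=
  Measure.pi fun _ => (PMF.bernoulli (min p 1).toNNReal
    (by have h := ENNReal.toNNReal_mono ENNReal.one_ne_top (min_le_right p 1); rwa [ENNReal.toNNReal_one] at h)).toMeasure

/-- `σ ∼ σ'` in the configuration `ω`: the union is a `d`-simplex present in `ω`. -/
def nbr (n d : ℕ) (ω : Finset (Fin n) → Bool) (σ σ' : Finset (Fin n)) : Prop :=
  (σ ∪ σ').card = d + 1 ∧ ω (σ ∪ σ') = true

instance (n d : ℕ) (ω : Finset (Fin n) → Bool) (σ σ' : Finset (Fin n)) :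
    Decidable (nbr n d ω σ σ') := by unfold nbr; infer_instance



open Classical in
noncomputable def mrg {ι : Type*} (s : Set ι) (x y : ι → Bool) : ι → Bool :=
  fun i => if i ∈ s then x i else y i

lemma mrg_invol {ι : Type*} (s : Set ι) (x y : ι → Bool) :
    mrg s (mrg s x y) (mrg s y x) = x := by
  funext i; by_cases h : i ∈ s <;> simp [mrg, h]

lemma block2 {ι : Type*} [DecidableEq ι] [Fintype ι] (w F G : (ι → Bool) → ℝ≥0∞) (s : Set ι)
    (hw : ∀ x y, w (mrg s x y) * w (mrg s y x) = w x * w y)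
    (htot : ∑ ω, w ω = 1)
    (hF : ∀ x y, (∀ i ∈ s, x i = y i) → F x = F y)
    (hG : ∀ x y, (∀ i ∉ s, x i = y i) → G x = G y) :
    (∑ ω, w ω * F ω) * (∑ ω, w ω * G ω) = ∑ ω, w ω * (F ω * G ω) := by
  classical
  have key : ∀ x y : ι → Bool,
      (w (mrg s x y) * F (mrg s x y)) * (w (mrg s y x) * G (mrg s y x))
        = (w x * w y) * (F x * G x) := by
    intro x y
    have hF' : F (mrg s x y) = F x := hF _ _ (fun i hi => by simp [mrg, hi])
    have hG' : G (mrg s y x) = G x := hG _ _ (fun i hi => by simp [mrg, hi])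
    rw [hF', hG']
    rw [show (w (mrg s x y) * F x) * (w (mrg s y x) * G x)
        = (w (mrg s x y) * w (mrg s y x)) * (F x * G x) by ring, hw]
  have hbij : Function.Bijective (fun p : (ι → Bool) × (ι → Bool) =>
      (mrg s p.1 p.2, mrg s p.2 p.1)) := by
    apply Function.Involutive.bijective
    intro p
    exact Prod.ext (mrg_invol s p.1 p.2) (mrg_invol s p.2 p.1)
  calc (∑ ω, w ω * F ω) * (∑ ω, w ω * G ω)
      = ∑ x, ∑ y, (w x * F x) * (w y * G y) := by rw [Finset.sum_mul_sum]
    _ = ∑ p : (ι → Bool) × (ι → Bool), (w p.1 * F p.1) * (w p.2 * G p.2) :=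
        (Fintype.sum_prod_type' _).symm
    _ = ∑ p : (ι → Bool) × (ι → Bool),
          (w (mrg s p.1 p.2) * F (mrg s p.1 p.2)) * (w (mrg s p.2 p.1) * G (mrg s p.2 p.1)) :=
        (Fintype.sum_bijective _ hbij _ _ (fun p => rfl)).symm
    _ = ∑ p : (ι → Bool) × (ι → Bool), (w p.1 * w p.2) * (F p.1 * G p.1) :=
        Finset.sum_congr rfl fun p _ => key p.1 p.2
    _ = ∑ x, ∑ y, (w x * w y) * (F x * G x) :=
        Fintype.sum_prod_type' (fun x y => (w x * w y) * (F x * G x))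
    _ = (∑ x, w x * (F x * G x)) * (∑ y, w y) := by
        rw [Finset.sum_mul_sum]
        exact Finset.sum_congr rfl fun x _ => Finset.sum_congr rfl fun y _ => by ring
    _ = ∑ ω, w ω * (F ω * G ω) := by rw [htot, mul_one]

lemma blockFactor {ι : Type*} [DecidableEq ι] [Fintype ι] {κ : Type*} (w : (ι → Bool) → ℝ≥0∞)
    (hw : ∀ (s : Set ι) (x y : ι → Bool), w (mrg s x y) * w (mrg s y x) = w x * w y)
    (htot : ∑ ω, w ω = 1)
    (J : Finset κ) (f : κ → (ι → Bool) → ℝ≥0∞) (s : κ → Set ι)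
    (hloc : ∀ j ∈ J, ∀ x y, (∀ i ∈ s j, x i = y i) → f j x = f j y)
    (hdisj : ∀ j ∈ J, ∀ j' ∈ J, j ≠ j' → ∀ i ∈ s j, i ∉ s j') :
    ∑ ω, w ω * ∏ j ∈ J, f j ω = ∏ j ∈ J, ∑ ω, w ω * f j ω := by
  classical
  induction J using Finset.induction_on with
  | empty => simpa using htot
  | @insert j J hj ih =>
    rw [Finset.prod_insert hj]
    have step := block2 w (f j) (fun ω => ∏ j' ∈ J, f j' ω) (s j) (hw (s j)) htot
      (hloc j (Finset.mem_insert_self j J))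
      (fun x y hxy => Finset.prod_congr rfl fun j' hj' => by
        apply hloc j' (Finset.mem_insert_of_mem hj')
        intro i hi
        apply hxy
        intro his
        exact hdisj j (Finset.mem_insert_self j J) j' (Finset.mem_insert_of_mem hj')
          (fun h => hj (h ▸ hj')) i his hi)
    have heq : ∑ ω, w ω * (f j ω * ∏ j' ∈ J, f j' ω)
        = (∑ ω, w ω * f j ω) * ∑ ω, w ω * ∏ j' ∈ J, f j' ω := step.symm
    rw [show (fun ω => w ω * ∏ j' ∈ insert j J, f j' ω) = fun ω => w ω * (f j ω * ∏ j' ∈ J, f j' ω)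
        from funext fun ω => by rw [Finset.prod_insert hj], heq,
      ih (fun j' hj' => hloc j' (Finset.mem_insert_of_mem hj'))
      (fun a ha b hb hab => hdisj a (Finset.mem_insert_of_mem ha) b
        (Finset.mem_insert_of_mem hb) hab)]



section facts
variable (n : ℕ) (p : ℝ≥0∞)

noncomputable abbrev bern (p : ℝ≥0∞) : Measure Bool :=
  (PMF.bernoulli (min p 1).toNNReal
    (by have h := ENNReal.toNNReal_mono ENNReal.one_ne_top (min_le_right p 1); rwa [ENNReal.toNNReal_one] at h)).toMeasure

lemma bern_singleton (b : Bool) : bern p {b} = cond b (min p 1) (1 - min p 1) := by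
  have hne : min p 1 ≠ ⊤ := ne_top_of_le_ne_top ENNReal.one_ne_top (min_le_right p 1)
  rw [PMF.toMeasure_apply_singleton _ _ (MeasurableSet.singleton b), PMF.bernoulli_apply]
  cases b
  · rw [cond_false, cond_false, ENNReal.coe_sub, ENNReal.coe_one, ENNReal.coe_toNNReal hne]
  · rw [cond_true, cond_true, ENNReal.coe_toNNReal hne]

lemma lm_singleton (ω : Finset (Fin n) → Bool) :
    linialMeshulam n p {ω} = ∏ c : Finset (Fin n), bern p {ω c} := by
  rw [linialMeshulam, ← Set.univ_pi_singleton, Measure.pi_pi]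

lemma lm_mrg (s : Set (Finset (Fin n))) (x y : Finset (Fin n) → Bool) :
    linialMeshulam n p {mrg s x y} * linialMeshulam n p {mrg s y x}
      = linialMeshulam n p {x} * linialMeshulam n p {y} := by
  classical
  simp only [lm_singleton, ← Finset.prod_mul_distrib]
  refine Finset.prod_congr rfl fun c _ => ?_
  by_cases h : c ∈ s <;> simp [mrg, h, mul_comm]

lemma lm_finset (s : Finset (Finset (Fin n) → Bool)) :
    linialMeshulam n p ↑s = ∑ ω ∈ s, linialMeshulam n p {ω} := by
  have : (↑s : Set _) = ⋃ ω ∈ s, ({ω} : Set _) := by ext x; simp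
  rw [this, measure_biUnion_finset]
  · exact fun x _ y _ h => by simp [Set.disjoint_singleton, h]
  · exact fun _ _ => MeasurableSet.singleton _

lemma lm_tot : ∑ ω : Finset (Fin n) → Bool, linialMeshulam n p {ω} = 1 := by
  have : IsProbabilityMeasure (linialMeshulam n p) := by unfold linialMeshulam; infer_instance
  rw [← lm_finset, Finset.coe_univ, measure_univ]

lemma lm_event (Pr : (Finset (Fin n) → Bool) → Prop) [DecidablePred Pr] :
    linialMeshulam n p {ω | Pr ω}
      = ∑ ω : Finset (Fin n) → Bool, linialMeshulam n p {ω} * (if Pr ω then 1 else 0) := by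
  have h1 : {ω | Pr ω} = ↑(Finset.univ.filter Pr) := by ext ω; simp
  rw [h1, lm_finset, Finset.sum_filter]
  exact Finset.sum_congr rfl fun ω _ => by split <;> [rw [mul_one]; rw [mul_zero]]

-- box lemma, three distinct coordinates
lemma lm_box3 (c₁ c₂ c₃ : Finset (Fin n)) (h12 : c₁ ≠ c₂) (h13 : c₁ ≠ c₃) (h23 : c₂ ≠ c₃)
    (b₁ b₂ b₃ : Bool) :
    linialMeshulam n p {ω | ω c₁ = b₁ ∧ ω c₂ = b₂ ∧ ω c₃ = b₃}
      = bern p {b₁} * bern p {b₂} * bern p {b₃} := by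
  classical
  have : IsProbabilityMeasure (bern p) := PMF.toMeasure.isProbabilityMeasure _
  have hset : {ω : Finset (Fin n) → Bool | ω c₁ = b₁ ∧ ω c₂ = b₂ ∧ ω c₃ = b₃}
      = Set.pi Set.univ (fun c => if c = c₁ then {b₁} else if c = c₂ then {b₂}
          else if c = c₃ then ({b₃} : Set Bool) else Set.univ) := by
    ext ω
    simp only [Set.mem_setOf_eq, Set.mem_pi, Set.mem_univ, forall_true_left]
    constructor
    · rintro ⟨hh1, hh2, hh3⟩ c
      split_ifs <;> simp_all
    · intro h
      refine ⟨?_, ?_, ?_⟩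
      · have := h c₁; simpa using this
      · have := h c₂; rw [if_neg (Ne.symm h12)] at this; simpa using this
      · have := h c₃; rw [if_neg (Ne.symm h13), if_neg (Ne.symm h23)] at this; simpa using this
  rw [hset, linialMeshulam, Measure.pi_pi]
  rw [show (Finset.univ : Finset (Finset (Fin n))) = Finset.univ from rfl]
  rw [← Finset.prod_subset (Finset.subset_univ ({c₁, c₂, c₃} : Finset (Finset (Fin n))))
    (fun c _ hc => by
      simp only [Finset.mem_insert, Finset.mem_singleton, not_or] at hc
      simp [hc.1, hc.2.1, hc.2.2]
      rw [PMF.bernoulli_apply, PMF.bernoulli_apply, cond_true, cond_false, ← ENNReal.coe_add,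
        add_tsub_cancel_of_le (by have h := ENNReal.toNNReal_mono ENNReal.one_ne_top (min_le_right p 1); rwa [ENNReal.toNNReal_one] at h),
        ENNReal.coe_one])]
  rw [Finset.prod_insert (by simp [h12, h13]), Finset.prod_insert (by simp [h23]),
    Finset.prod_singleton]
  rw [if_pos rfl, if_neg (Ne.symm h12), if_pos rfl, if_neg (Ne.symm h13),
    if_neg (Ne.symm h23), if_pos rfl, ← mul_assoc]
end facts



lemma stepA {n d : ℕ} (hd : 0 < d) {σ₁ σ₂ σ₃ σ₄ τ : Finset (Fin n)}
    (h₁ : σ₁.card = d) (h₂ : σ₂.card = d)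
    (hK : (σ₁ ∩ σ₂).card = d - 1)
    (hτ34 : τ = σ₃ ∨ τ = σ₄)
    (ω : Finset (Fin n) → Bool) :
    ((Finset.univ \ (σ₁ ∪ σ₂ ∪ σ₃ ∪ σ₄)).filter fun v =>
        ω (insert v σ₁) = true ∧ ω (insert v σ₂) = true ∧
          ((insert v ((σ₁ ∩ σ₂) ∪ τ)).card = d + 1 →
            ω (insert v ((σ₁ ∩ σ₂) ∪ τ)) = false)).card
      + (Finset.univ.filter fun σ : Finset (Fin n) =>
            σ.card = d ∧ nbr n d ω σ σ₁ ∧ nbr n d ω σ σ₂ ∧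
              nbr n d ω σ σ₃ ∧ nbr n d ω σ σ₄).card
      ≤ (Finset.univ.filter fun σ : Finset (Fin n) =>
          σ.card = d ∧ nbr n d ω σ σ₁ ∧ nbr n d ω σ σ₂).card := by
  classical
  have hSW : (Finset.univ.filter fun σ : Finset (Fin n) =>
      σ.card = d ∧ nbr n d ω σ σ₁ ∧ nbr n d ω σ σ₂ ∧
        nbr n d ω σ σ₃ ∧ nbr n d ω σ σ₄)
      ⊆ (Finset.univ.filter fun σ : Finset (Fin n) =>
          σ.card = d ∧ nbr n d ω σ σ₁ ∧ nbr n d ω σ σ₂) := by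
    intro σ hσ
    simp only [Finset.mem_filter] at hσ ⊢
    exact ⟨hσ.1, hσ.2.1, hσ.2.2.1, hσ.2.2.2.1⟩
  rw [← Finset.card_sdiff_add_card_eq_card hSW]
  apply Nat.add_le_add_right
  apply Finset.card_le_card_of_injOn (fun v => insert v (σ₁ ∩ σ₂))
  · -- maps into Wset \ Sset
    intro v hv
    simp only [Finset.coe_filter, Set.mem_setOf_eq, Finset.mem_filter, Finset.mem_sdiff, Finset.mem_univ, true_and,
      Finset.mem_union, not_or] at hv
    obtain ⟨⟨⟨⟨hv1, hv2⟩, hv3⟩, hv4⟩, hx1, hx2, hx3⟩ := hv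
    have hvK : v ∉ σ₁ ∩ σ₂ := fun h => hv1 (Finset.mem_of_mem_inter_left h)
    have hcard : (insert v (σ₁ ∩ σ₂)).card = d := by
      rw [Finset.card_insert_of_notMem hvK, hK]
      omega
    have hu1 : insert v (σ₁ ∩ σ₂) ∪ σ₁ = insert v σ₁ := by
      rw [Finset.insert_union, Finset.union_eq_right.mpr Finset.inter_subset_left]
    have hu2 : insert v (σ₁ ∩ σ₂) ∪ σ₂ = insert v σ₂ := by
      rw [Finset.insert_union, Finset.union_eq_right.mpr Finset.inter_subset_right]
    have hn1 : nbr n d ω (insert v (σ₁ ∩ σ₂)) σ₁ := by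
      refine ⟨?_, by rwa [hu1]⟩
      rw [hu1, Finset.card_insert_of_notMem hv1, h₁]
    have hn2 : nbr n d ω (insert v (σ₁ ∩ σ₂)) σ₂ := by
      refine ⟨?_, by rwa [hu2]⟩
      rw [hu2, Finset.card_insert_of_notMem hv2, h₂]
    have huτ : insert v (σ₁ ∩ σ₂) ∪ τ = insert v ((σ₁ ∩ σ₂) ∪ τ) := Finset.insert_union _ _ _
    have hnτ : ¬ nbr n d ω (insert v (σ₁ ∩ σ₂)) τ := by
      rintro ⟨hc, ht⟩
      rw [huτ] at hc ht
      rw [hx3 hc] at ht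
      exact Bool.false_ne_true ht
    simp only [Finset.mem_coe, Finset.mem_sdiff, Finset.mem_filter, Finset.mem_univ, true_and]
    refine ⟨⟨hcard, hn1, hn2⟩, ?_⟩
    rintro ⟨-, -, -, hn3, hn4⟩
    rcases hτ34 with rfl | rfl
    · exact hnτ hn3
    · exact hnτ hn4
  · -- injective
    intro v hv v' hv' he
    simp only [Finset.coe_filter, Set.mem_setOf_eq, Finset.mem_sdiff, Finset.mem_univ,
      true_and, Finset.mem_union, not_or] at hv hv'
    have hvK : v ∉ σ₁ ∩ σ₂ := fun h => hv.1.1.1.1 (Finset.mem_of_mem_inter_left h)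
    have : v ∈ insert v' (σ₁ ∩ σ₂) := by
      have h2 : insert v (σ₁ ∩ σ₂) = insert v' (σ₁ ∩ σ₂) := he
      rw [← h2]
      exact Finset.mem_insert_self _ _
    rcases Finset.mem_insert.mp this with h | h
    · exact h
    · exact absurd h hvK

lemma markov_pt {γ : Type*} (V : Finset γ) (X : γ → Prop) [DecidablePred X]
    (E : Prop) [Decidable E] (t : ℝ) :
    (if E ∧ ((V.filter X).card : ℝ) ≤ t then (1 : ℝ≥0∞) else 0)
      ≤ ENNReal.ofReal (Real.exp t) *
        ((if E then 1 else 0) *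
          ∏ v ∈ V, (if X v then ENNReal.ofReal (Real.exp (-1)) else 1)) := by
  classical
  by_cases hEB : E ∧ ((V.filter X).card : ℝ) ≤ t
  · rw [if_pos hEB, if_pos hEB.1]
    have hprod : ∏ v ∈ V, (if X v then ENNReal.ofReal (Real.exp (-1)) else 1)
        = ENNReal.ofReal (Real.exp (-1)) ^ (V.filter X).card := by
      rw [← Finset.prod_filter_mul_prod_filter_not V X,
        Finset.prod_congr rfl (fun v hv => if_pos (Finset.mem_filter.mp hv).2),
        Finset.prod_const,
        Finset.prod_congr rfl (fun v hv => if_neg (Finset.mem_filter.mp hv).2),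
        Finset.prod_const, one_pow, mul_one]
    rw [hprod, one_mul, ← ENNReal.ofReal_pow (Real.exp_nonneg _), ← Real.exp_nat_mul,
      ← ENNReal.ofReal_mul (Real.exp_nonneg _), ← Real.exp_add, ENNReal.one_le_ofReal]
    have h0 : (0 : ℝ) ≤ t + (V.filter X).card * (-1) := by
      have := hEB.2; linarith
    calc (1 : ℝ) = Real.exp 0 := Real.exp_zero.symm
      _ ≤ _ := Real.exp_le_exp.mpr h0
  · rw [if_neg hEB]
    exact zero_le'

lemma gv_bound {n : ℕ} {r : ℝ} (hr0 : 0 < r) (hr1 : r ≤ 1 / 2) (a b c : Finset (Fin n))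
    (hab : a ≠ b) (hac : a ≠ c) (hbc : b ≠ c)
    (X : (Finset (Fin n) → Bool) → Prop) [DecidablePred X]
    (hX : ∀ ω, ω a = true → ω b = true → ω c = false → X ω) :
    (∑ ω : Finset (Fin n) → Bool, linialMeshulam n (ENNReal.ofReal r) {ω} *
      (if X ω then ENNReal.ofReal (Real.exp (-1)) else 1))
    ≤ ENNReal.ofReal (Real.exp (-((1 - Real.exp (-1)) * (r ^ 2 * (1 - r))))) := by
  classical
  haveI : IsProbabilityMeasure (linialMeshulam n (ENNReal.ofReal r)) := by
    unfold linialMeshulam; infer_instance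
  set μ := linialMeshulam n (ENNReal.ofReal r) with hμ
  set ρ := μ {ω | X ω} with hρdef
  -- split the sum
  have hsplit : (∑ ω : Finset (Fin n) → Bool, μ {ω} *
      (if X ω then ENNReal.ofReal (Real.exp (-1)) else 1))
      = ENNReal.ofReal (Real.exp (-1)) * ρ + (1 - ρ) := by
    have h1 : ∀ ω : Finset (Fin n) → Bool,
        (if X ω then ENNReal.ofReal (Real.exp (-1)) else 1)
        = ENNReal.ofReal (Real.exp (-1)) * (if X ω then 1 else 0)
          + (if ¬ X ω then 1 else 0) := by
      intro ω; split_ifs with h h2 h2 <;> simp_all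
    rw [Finset.sum_congr rfl fun ω _ => by rw [h1 ω, mul_add]]
    rw [Finset.sum_add_distrib]
    congr 1
    · rw [Finset.sum_congr rfl fun ω _ => by
        rw [show μ {ω} * (ENNReal.ofReal (Real.exp (-1)) * (if X ω then 1 else 0))
          = ENNReal.ofReal (Real.exp (-1)) * (μ {ω} * (if X ω then 1 else 0)) by ring],
        ← Finset.mul_sum, ← lm_event]
    · rw [← lm_event]
      have hcompl : {ω : Finset (Fin n) → Bool | ¬ X ω} = {ω : Finset (Fin n) → Bool | X ω}ᶜ := rfl
      rw [hcompl, prob_compl_eq_one_sub (Set.toFinite _).measurableSet]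
  rw [hsplit]
  -- bounds on ρ
  have hbox : μ {ω : Finset (Fin n) → Bool | ω a = true ∧ ω b = true ∧ ω c = false}
      = ENNReal.ofReal (r ^ 2 * (1 - r)) := by
    rw [hμ, lm_box3 n (ENNReal.ofReal r) a b c hab hac hbc true true false]
    have hmin : min (ENNReal.ofReal r) 1 = ENNReal.ofReal r :=
      min_eq_left (ENNReal.ofReal_le_one.mpr (by linarith))
    have hbT : bern (ENNReal.ofReal r) {true} = ENNReal.ofReal r := by
      rw [bern_singleton]; simp [hmin]
    have hbF : bern (ENNReal.ofReal r) {false} = ENNReal.ofReal (1 - r) := by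
      rw [bern_singleton]
      simp only [Bool.cond_false, hmin]
      rw [ENNReal.ofReal_sub 1 hr0.le, ENNReal.ofReal_one]
    rw [hbT, hbF, ← ENNReal.ofReal_mul hr0.le, ← ENNReal.ofReal_mul (mul_nonneg hr0.le hr0.le)]
    congr 1; ring
  have hρlow : ENNReal.ofReal (r ^ 2 * (1 - r)) ≤ ρ := by
    rw [← hbox]
    exact measure_mono fun ω hω => hX ω hω.1 hω.2.1 hω.2.2
  have hρtop : ρ ≠ ⊤ := measure_ne_top _ _
  have hρ1 : ρ ≤ 1 := prob_le_one
  set x := ρ.toReal with hx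
  have hx0 : (0 : ℝ) ≤ x := ENNReal.toReal_nonneg
  have hx1 : x ≤ 1 := by
    have := ENNReal.toReal_mono (by simp : (1 : ℝ≥0∞) ≠ ⊤) hρ1
    simpa using this
  have hxlow : r ^ 2 * (1 - r) ≤ x := by
    have := ENNReal.toReal_mono hρtop hρlow
    rwa [ENNReal.toReal_ofReal (mul_nonneg (sq_nonneg r) (by linarith))] at this
  have hρeq : ρ = ENNReal.ofReal x := (ENNReal.ofReal_toReal hρtop).symm
  have heq : ENNReal.ofReal (Real.exp (-1)) * ρ + (1 - ρ)
      = ENNReal.ofReal (Real.exp (-1) * x + (1 - x)) := by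
    rw [hρeq, ← ENNReal.ofReal_one, ← ENNReal.ofReal_sub 1 hx0,
      ← ENNReal.ofReal_mul (Real.exp_nonneg _),
      ← ENNReal.ofReal_add (mul_nonneg (Real.exp_nonneg _) hx0) (sub_nonneg.mpr hx1)]
  rw [heq]
  apply ENNReal.ofReal_le_ofReal
  have hθ : (0 : ℝ) ≤ 1 - Real.exp (-1) := by
    have : Real.exp (-1) ≤ Real.exp 0 := Real.exp_le_exp.mpr (by norm_num)
    rw [Real.exp_zero] at this; linarith
  have key := Real.add_one_le_exp (-((1 - Real.exp (-1)) * (r ^ 2 * (1 - r))))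
  have hmul : (1 - Real.exp (-1)) * (r ^ 2 * (1 - r)) ≤ (1 - Real.exp (-1)) * x :=
    mul_le_mul_of_nonneg_left hxlow hθ
  linarith

lemma main_est (n d : ℕ) (hd : 0 < d) (r : ℝ) (hr0 : 0 < r) (hr1 : r ≤ 1/2)
    (σ₁ σ₂ σ₃ σ₄ : Finset (Fin n))
    (h₁ : σ₁.card = d) (h₂ : σ₂.card = d) (h₃ : σ₃.card = d) (h₄ : σ₄.card = d)
    (h12 : σ₁ ≠ σ₂) (h34 : σ₃ ≠ σ₄)
    (hK12 : (σ₁ ∩ σ₂).card = d - 1) (hK34 : (σ₃ ∩ σ₄).card = d - 1)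
    (hpair : ({σ₁, σ₂} : Finset (Finset (Fin n))) ≠ {σ₃, σ₄}) :
    (linialMeshulam n (ENNReal.ofReal r)
      {ω | (ω (σ₁ ∪ σ₂) = true ∧ ω (σ₃ ∪ σ₄) = true) ∧
        ((Finset.univ.filter fun σ : Finset (Fin n) =>
            σ.card = d ∧ nbr n d ω σ σ₁ ∧ nbr n d ω σ σ₂).card : ℝ) -
          ((Finset.univ.filter fun σ : Finset (Fin n) =>
            σ.card = d ∧ nbr n d ω σ σ₁ ∧ nbr n d ω σ σ₂ ∧
              nbr n d ω σ σ₃ ∧ nbr n d ω σ σ₄).card : ℝ) -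
          ((if nbr n d ω σ₁ σ₃ ∧ nbr n d ω σ₁ σ₄ then (1 : ℝ) else 0) +
            (if nbr n d ω σ₂ σ₃ ∧ nbr n d ω σ₂ σ₄ then (1 : ℝ) else 0)) ≤
        (n : ℝ) * r ^ 2 / 2})
    ≤ ENNReal.ofReal (Real.exp (((n : ℝ) * r ^ 2 / 2 + 2)
        - (1 - Real.exp (-1)) * (r ^ 2 * (1 - r)) * ((n : ℝ) - 4 * d)))
      * linialMeshulam n (ENNReal.ofReal r)
          {ω | ω (σ₁ ∪ σ₂) = true ∧ ω (σ₃ ∪ σ₄) = true} := by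
  classical
  -- construct τ
  obtain ⟨τ, hτ34, hτ1, hτ2, hτc⟩ :
      ∃ τ : Finset (Fin n), (τ = σ₃ ∨ τ = σ₄) ∧ τ ≠ σ₁ ∧ τ ≠ σ₂ ∧ τ.card = d := by
    by_cases h3 : σ₃ = σ₁ ∨ σ₃ = σ₂
    · refine ⟨σ₄, Or.inr rfl, ?_, ?_, h₄⟩
      · rintro rfl
        rcases h3 with rfl | rfl
        · exact h34 rfl
        · exact hpair (by rw [Finset.pair_comm])
      · rintro rfl
        rcases h3 with rfl | rfl
        · exact hpair rfl
        · exact h34 rfl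
    · push_neg at h3
      exact ⟨σ₃, Or.inl rfl, h3.1, h3.2, h₃⟩
  set t : ℝ := (n : ℝ) * r ^ 2 / 2 + 2 with ht
  set V : Finset (Fin n) := Finset.univ \ (σ₁ ∪ σ₂ ∪ σ₃ ∪ σ₄) with hV
  -- the inclusion into E ∩ B
  have hsub : {ω : Finset (Fin n) → Bool |
        (ω (σ₁ ∪ σ₂) = true ∧ ω (σ₃ ∪ σ₄) = true) ∧
        ((Finset.univ.filter fun σ : Finset (Fin n) =>
            σ.card = d ∧ nbr n d ω σ σ₁ ∧ nbr n d ω σ σ₂).card : ℝ) -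
          ((Finset.univ.filter fun σ : Finset (Fin n) =>
            σ.card = d ∧ nbr n d ω σ σ₁ ∧ nbr n d ω σ σ₂ ∧
              nbr n d ω σ σ₃ ∧ nbr n d ω σ σ₄).card : ℝ) -
          ((if nbr n d ω σ₁ σ₃ ∧ nbr n d ω σ₁ σ₄ then (1 : ℝ) else 0) +
            (if nbr n d ω σ₂ σ₃ ∧ nbr n d ω σ₂ σ₄ then (1 : ℝ) else 0)) ≤
        (n : ℝ) * r ^ 2 / 2}
      ⊆ {ω : Finset (Fin n) → Bool |
          (ω (σ₁ ∪ σ₂) = true ∧ ω (σ₃ ∪ σ₄) = true) ∧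
          ((V.filter fun v =>
            ω (insert v σ₁) = true ∧ ω (insert v σ₂) = true ∧
              ((insert v ((σ₁ ∩ σ₂) ∪ τ)).card = d + 1 →
                ω (insert v ((σ₁ ∩ σ₂) ∪ τ)) = false)).card : ℝ) ≤ t} := by
    intro ω hω
    obtain ⟨hE, hnum⟩ := hω
    refine ⟨hE, ?_⟩
    have hA := stepA hd h₁ h₂ hK12 hτ34 ω
    have hZ1 : (if nbr n d ω σ₁ σ₃ ∧ nbr n d ω σ₁ σ₄ then (1 : ℝ) else 0) ≤ 1 := by
      split <;> norm_num
    have hZ2 : (if nbr n d ω σ₂ σ₃ ∧ nbr n d ω σ₂ σ₄ then (1 : ℝ) else 0) ≤ 1 := by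
      split <;> norm_num
    have hcast : ((((Finset.univ \ (σ₁ ∪ σ₂ ∪ σ₃ ∪ σ₄)).filter fun v =>
        ω (insert v σ₁) = true ∧ ω (insert v σ₂) = true ∧
          ((insert v ((σ₁ ∩ σ₂) ∪ τ)).card = d + 1 →
            ω (insert v ((σ₁ ∩ σ₂) ∪ τ)) = false)).card : ℝ)
      + ((Finset.univ.filter fun σ : Finset (Fin n) =>
            σ.card = d ∧ nbr n d ω σ σ₁ ∧ nbr n d ω σ σ₂ ∧
              nbr n d ω σ σ₃ ∧ nbr n d ω σ σ₄).card : ℝ)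
      ≤ ((Finset.univ.filter fun σ : Finset (Fin n) =>
          σ.card = d ∧ nbr n d ω σ σ₁ ∧ nbr n d ω σ σ₂).card : ℝ)) := by
      exact_mod_cast hA
    rw [hV, ht]
    linarith [hnum]
  haveI : IsProbabilityMeasure (linialMeshulam n (ENNReal.ofReal r)) := by
    unfold linialMeshulam; infer_instance
  refine le_trans (measure_mono hsub) ?_
  -- helper facts about members of V
  have hVfacts : ∀ v ∈ V, v ∉ σ₁ ∧ v ∉ σ₂ ∧ v ∉ σ₃ ∧ v ∉ σ₄ := by
    intro v hv
    rw [hV, Finset.mem_sdiff] at hv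
    simp only [Finset.mem_union, not_or] at hv
    tauto
  have hvτ : ∀ v ∈ V, v ∉ τ := by
    intro v hv
    obtain ⟨-, -, h3, h4⟩ := hVfacts v hv
    rcases hτ34 with rfl | rfl <;> assumption
  have hvKτ : ∀ v ∈ V, v ∉ (σ₁ ∩ σ₂) ∪ τ := by
    intro v hv
    obtain ⟨hh1, -, -, -⟩ := hVfacts v hv
    simp only [Finset.mem_union, Finset.mem_inter, not_or]
    exact ⟨fun h => hh1 h.1, hvτ v hv⟩
  -- distinctness of the three coordinates of each block
  have hdist : ∀ v ∈ V, insert v σ₁ ≠ insert v σ₂ ∧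
      insert v σ₁ ≠ insert v ((σ₁ ∩ σ₂) ∪ τ) ∧
      insert v σ₂ ≠ insert v ((σ₁ ∩ σ₂) ∪ τ) := by
    intro v hv
    obtain ⟨hh1, hh2, -, -⟩ := hVfacts v hv
    refine ⟨fun h => h12 ?_, fun h => ?_, fun h => ?_⟩
    · have := congrArg (fun s => Finset.erase s v) h
      simpa only [Finset.erase_insert hh1, Finset.erase_insert hh2] using this
    · have heq : σ₁ = (σ₁ ∩ σ₂) ∪ τ := by
        have := congrArg (fun s => Finset.erase s v) h
        simpa only [Finset.erase_insert hh1, Finset.erase_insert (hvKτ v hv)] using this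
      have hsubτ : τ ⊆ σ₁ := by rw [heq]; exact Finset.subset_union_right
      exact hτ1 (Finset.eq_of_subset_of_card_le hsubτ (by rw [h₁, hτc]))
    · have heq : σ₂ = (σ₁ ∩ σ₂) ∪ τ := by
        have := congrArg (fun s => Finset.erase s v) h
        simpa only [Finset.erase_insert hh2, Finset.erase_insert (hvKτ v hv)] using this
      have hsubτ : τ ⊆ σ₂ := by rw [heq]; exact Finset.subset_union_right
      exact hτ2 (Finset.eq_of_subset_of_card_le hsubτ (by rw [h₂, hτc]))
  -- per-v bound
  have hgv : ∀ v ∈ V,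
      (∑ ω : Finset (Fin n) → Bool, linialMeshulam n (ENNReal.ofReal r) {ω} *
        (if (ω (insert v σ₁) = true ∧ ω (insert v σ₂) = true ∧
            ((insert v ((σ₁ ∩ σ₂) ∪ τ)).card = d + 1 →
              ω (insert v ((σ₁ ∩ σ₂) ∪ τ)) = false))
          then ENNReal.ofReal (Real.exp (-1)) else 1))
      ≤ ENNReal.ofReal (Real.exp (-((1 - Real.exp (-1)) * (r ^ 2 * (1 - r))))) := by
    intro v hv
    obtain ⟨hab, hac, hbc⟩ := hdist v hv
    exact gv_bound hr0 hr1 _ _ _ hab hac hbc _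
      (fun ω pa pb pc => ⟨pa, pb, fun _ => pc⟩)
  -- |V| ≥ n - 4d
  have hVcard : (n : ℝ) - 4 * d ≤ (V.card : ℝ) := by
    have hU4 : (σ₁ ∪ σ₂ ∪ σ₃ ∪ σ₄).card ≤ 4 * d := by
      calc (σ₁ ∪ σ₂ ∪ σ₃ ∪ σ₄).card ≤ (σ₁ ∪ σ₂ ∪ σ₃).card + σ₄.card :=
            Finset.card_union_le _ _
        _ ≤ ((σ₁ ∪ σ₂).card + σ₃.card) + σ₄.card :=
            Nat.add_le_add_right (Finset.card_union_le _ _) _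
        _ ≤ ((σ₁.card + σ₂.card) + σ₃.card) + σ₄.card :=
            Nat.add_le_add_right (Nat.add_le_add_right (Finset.card_union_le _ _) _) _
        _ = 4 * d := by rw [h₁, h₂, h₃, h₄]; ring
    have hUn : (σ₁ ∪ σ₂ ∪ σ₃ ∪ σ₄).card ≤ n := by
      refine le_trans (Finset.card_le_univ _) ?_
      simp
    have hVc : V.card = n - (σ₁ ∪ σ₂ ∪ σ₃ ∪ σ₄).card := by
      rw [hV, Finset.card_sdiff_of_subset (Finset.subset_univ _), Finset.card_univ, Fintype.card_fin]
    rw [hVc, Nat.cast_sub hUn]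
    have : ((σ₁ ∪ σ₂ ∪ σ₃ ∪ σ₄).card : ℝ) ≤ 4 * d := by exact_mod_cast hU4
    linarith
  have hθ : (0 : ℝ) ≤ 1 - Real.exp (-1) := by
    have : Real.exp (-1) ≤ Real.exp 0 := Real.exp_le_exp.mpr (by norm_num)
    rw [Real.exp_zero] at this; linarith
  have hc00 : (0 : ℝ) ≤ (1 - Real.exp (-1)) * (r ^ 2 * (1 - r)) :=
    mul_nonneg hθ (mul_nonneg (sq_nonneg r) (by linarith))
  -- product bound
  have hprodbound : (∏ v ∈ V, ∑ ω : Finset (Fin n) → Bool,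
      linialMeshulam n (ENNReal.ofReal r) {ω} *
        (if (ω (insert v σ₁) = true ∧ ω (insert v σ₂) = true ∧
            ((insert v ((σ₁ ∩ σ₂) ∪ τ)).card = d + 1 →
              ω (insert v ((σ₁ ∩ σ₂) ∪ τ)) = false))
          then ENNReal.ofReal (Real.exp (-1)) else 1))
      ≤ ENNReal.ofReal (Real.exp (-((1 - Real.exp (-1)) * (r ^ 2 * (1 - r))
          * ((n : ℝ) - 4 * d)))) := by
    calc (∏ v ∈ V, ∑ ω : Finset (Fin n) → Bool,
        linialMeshulam n (ENNReal.ofReal r) {ω} *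
          (if (ω (insert v σ₁) = true ∧ ω (insert v σ₂) = true ∧
              ((insert v ((σ₁ ∩ σ₂) ∪ τ)).card = d + 1 →
                ω (insert v ((σ₁ ∩ σ₂) ∪ τ)) = false))
            then ENNReal.ofReal (Real.exp (-1)) else 1))
        ≤ ∏ _v ∈ V, ENNReal.ofReal (Real.exp (-((1 - Real.exp (-1)) * (r ^ 2 * (1 - r))))) :=
          Finset.prod_le_prod' hgv
      _ = ENNReal.ofReal (Real.exp (-((1 - Real.exp (-1)) * (r ^ 2 * (1 - r))))) ^ V.card :=
          Finset.prod_const _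
      _ = ENNReal.ofReal (Real.exp (-((1 - Real.exp (-1)) * (r ^ 2 * (1 - r)))) ^ V.card) := by
          rw [ENNReal.ofReal_pow (Real.exp_nonneg _)]
      _ = ENNReal.ofReal (Real.exp ((V.card : ℝ) * (-((1 - Real.exp (-1)) * (r ^ 2 * (1 - r)))))) := by
          rw [Real.exp_nat_mul]
      _ ≤ ENNReal.ofReal (Real.exp (-((1 - Real.exp (-1)) * (r ^ 2 * (1 - r))
            * ((n : ℝ) - 4 * d)))) := by
          apply ENNReal.ofReal_le_ofReal
          apply Real.exp_le_exp.mpr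
          nlinarith [hc00, hVcard]
  -- main calc
  calc (linialMeshulam n (ENNReal.ofReal r)
      {ω : Finset (Fin n) → Bool |
        (ω (σ₁ ∪ σ₂) = true ∧ ω (σ₃ ∪ σ₄) = true) ∧
        ((V.filter fun v =>
          ω (insert v σ₁) = true ∧ ω (insert v σ₂) = true ∧
            ((insert v ((σ₁ ∩ σ₂) ∪ τ)).card = d + 1 →
              ω (insert v ((σ₁ ∩ σ₂) ∪ τ)) = false)).card : ℝ) ≤ t})
      = ∑ ω : Finset (Fin n) → Bool, linialMeshulam n (ENNReal.ofReal r) {ω} *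
          (if ((ω (σ₁ ∪ σ₂) = true ∧ ω (σ₃ ∪ σ₄) = true) ∧
            ((V.filter fun v =>
              ω (insert v σ₁) = true ∧ ω (insert v σ₂) = true ∧
                ((insert v ((σ₁ ∩ σ₂) ∪ τ)).card = d + 1 →
                  ω (insert v ((σ₁ ∩ σ₂) ∪ τ)) = false)).card : ℝ) ≤ t)
            then 1 else 0) := lm_event n (ENNReal.ofReal r) _
    _ ≤ ∑ ω : Finset (Fin n) → Bool, linialMeshulam n (ENNReal.ofReal r) {ω} *
          (ENNReal.ofReal (Real.exp t) *
            ((if (ω (σ₁ ∪ σ₂) = true ∧ ω (σ₃ ∪ σ₄) = true) then 1 else 0) *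
              ∏ v ∈ V, (if (ω (insert v σ₁) = true ∧ ω (insert v σ₂) = true ∧
                  ((insert v ((σ₁ ∩ σ₂) ∪ τ)).card = d + 1 →
                    ω (insert v ((σ₁ ∩ σ₂) ∪ τ)) = false))
                then ENNReal.ofReal (Real.exp (-1)) else 1))) :=
        Finset.sum_le_sum fun ω _ => mul_le_mul_right
          (markov_pt V _ _ t) _
    _ = ENNReal.ofReal (Real.exp t) * ∑ ω : Finset (Fin n) → Bool,
          linialMeshulam n (ENNReal.ofReal r) {ω} *
          ((if (ω (σ₁ ∪ σ₂) = true ∧ ω (σ₃ ∪ σ₄) = true) then 1 else 0) *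
            ∏ v ∈ V, (if (ω (insert v σ₁) = true ∧ ω (insert v σ₂) = true ∧
                ((insert v ((σ₁ ∩ σ₂) ∪ τ)).card = d + 1 →
                  ω (insert v ((σ₁ ∩ σ₂) ∪ τ)) = false))
              then ENNReal.ofReal (Real.exp (-1)) else 1)) := by
        rw [Finset.mul_sum]
        exact Finset.sum_congr rfl fun ω _ => by ring
    _ = ENNReal.ofReal (Real.exp t) *
          ((∑ ω : Finset (Fin n) → Bool, linialMeshulam n (ENNReal.ofReal r) {ω} *
            (if (ω (σ₁ ∪ σ₂) = true ∧ ω (σ₃ ∪ σ₄) = true) then 1 else 0)) *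
           (∑ ω : Finset (Fin n) → Bool, linialMeshulam n (ENNReal.ofReal r) {ω} *
            ∏ v ∈ V, (if (ω (insert v σ₁) = true ∧ ω (insert v σ₂) = true ∧
                ((insert v ((σ₁ ∩ σ₂) ∪ τ)).card = d + 1 →
                  ω (insert v ((σ₁ ∩ σ₂) ∪ τ)) = false))
              then ENNReal.ofReal (Real.exp (-1)) else 1))) := by
        refine congrArg _ (block2 _ _ _ ({σ₁ ∪ σ₂, σ₃ ∪ σ₄} : Set (Finset (Fin n)))
          (lm_mrg n (ENNReal.ofReal r) _) (lm_tot n (ENNReal.ofReal r)) ?_ ?_).symm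
        · intro x y hxy
          simp only [hxy (σ₁ ∪ σ₂) (Set.mem_insert _ _),
            hxy (σ₃ ∪ σ₄) (Set.mem_insert_of_mem _ rfl)]
        · intro x y hxy
          refine Finset.prod_congr rfl fun v hv => ?_
          obtain ⟨hh1, hh2, hh3, hh4⟩ := hVfacts v hv
          have hn1 : insert v σ₁ ∉ ({σ₁ ∪ σ₂, σ₃ ∪ σ₄} : Set (Finset (Fin n))) := by
            intro h
            rcases h with h | h
            · have : v ∈ σ₁ ∪ σ₂ := h ▸ Finset.mem_insert_self v σ₁
              simp only [Finset.mem_union] at this; tauto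
            · have : v ∈ σ₃ ∪ σ₄ := h ▸ Finset.mem_insert_self v σ₁
              simp only [Finset.mem_union] at this; tauto
          have hn2 : insert v σ₂ ∉ ({σ₁ ∪ σ₂, σ₃ ∪ σ₄} : Set (Finset (Fin n))) := by
            intro h
            rcases h with h | h
            · have : v ∈ σ₁ ∪ σ₂ := h ▸ Finset.mem_insert_self v σ₂
              simp only [Finset.mem_union] at this; tauto
            · have : v ∈ σ₃ ∪ σ₄ := h ▸ Finset.mem_insert_self v σ₂
              simp only [Finset.mem_union] at this; tauto
          have hn3 : insert v ((σ₁ ∩ σ₂) ∪ τ) ∉ ({σ₁ ∪ σ₂, σ₃ ∪ σ₄} : Set (Finset (Fin n))) := by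
            intro h
            rcases h with h | h
            · have : v ∈ σ₁ ∪ σ₂ := h ▸ Finset.mem_insert_self v _
              simp only [Finset.mem_union] at this; tauto
            · have : v ∈ σ₃ ∪ σ₄ := h ▸ Finset.mem_insert_self v _
              simp only [Finset.mem_union] at this; tauto
          simp only [hxy _ hn1, hxy _ hn2, hxy _ hn3]
    _ = ENNReal.ofReal (Real.exp t) *
          (linialMeshulam n (ENNReal.ofReal r)
              {ω : Finset (Fin n) → Bool | ω (σ₁ ∪ σ₂) = true ∧ ω (σ₃ ∪ σ₄) = true} *
           ∏ v ∈ V, ∑ ω : Finset (Fin n) → Bool,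
            linialMeshulam n (ENNReal.ofReal r) {ω} *
            (if (ω (insert v σ₁) = true ∧ ω (insert v σ₂) = true ∧
                ((insert v ((σ₁ ∩ σ₂) ∪ τ)).card = d + 1 →
                  ω (insert v ((σ₁ ∩ σ₂) ∪ τ)) = false))
              then ENNReal.ofReal (Real.exp (-1)) else 1)) := by
        refine congrArg _ ?_
        refine congrArg₂ _ (lm_event n (ENNReal.ofReal r) _).symm ?_
        refine blockFactor _ (lm_mrg n (ENNReal.ofReal r)) (lm_tot n (ENNReal.ofReal r)) V _
          (fun v => ({insert v σ₁, insert v σ₂, insert v ((σ₁ ∩ σ₂) ∪ τ)} :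
            Set (Finset (Fin n)))) ?_ ?_
        · intro v hv x y hxy
          simp only [hxy _ (Set.mem_insert _ _),
            hxy _ (Set.mem_insert_of_mem _ (Set.mem_insert _ _)),
            hxy _ (Set.mem_insert_of_mem _ (Set.mem_insert_of_mem _ rfl))]
        · intro v hv v' hv' hne i hi hi'
          have hvin : v ∈ i := by
            rcases hi with h | h | h
            · exact h ▸ Finset.mem_insert_self _ _
            · exact h ▸ Finset.mem_insert_self _ _
            · exact h ▸ Finset.mem_insert_self _ _
          have hvnotin : v ∉ i := by
            obtain ⟨hh1, hh2, -, -⟩ := hVfacts v hv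
            rcases hi' with h | h | h
            · rw [h]
              simp only [Finset.mem_insert, not_or]
              exact ⟨hne, hh1⟩
            · rw [h]
              simp only [Finset.mem_insert, not_or]
              exact ⟨hne, hh2⟩
            · rw [h]
              simp only [Finset.mem_insert, not_or]
              refine ⟨hne, hvKτ v hv⟩
          exact hvnotin hvin
    _ ≤ ENNReal.ofReal (Real.exp t) *
          (linialMeshulam n (ENNReal.ofReal r)
              {ω : Finset (Fin n) → Bool | ω (σ₁ ∪ σ₂) = true ∧ ω (σ₃ ∪ σ₄) = true} *
            ENNReal.ofReal (Real.exp (-((1 - Real.exp (-1)) * (r ^ 2 * (1 - r))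
              * ((n : ℝ) - 4 * d))))) :=
        mul_le_mul_right (mul_le_mul_right hprodbound _) _
    _ = ENNReal.ofReal (Real.exp (((n : ℝ) * r ^ 2 / 2 + 2)
          - (1 - Real.exp (-1)) * (r ^ 2 * (1 - r)) * ((n : ℝ) - 4 * d)))
        * linialMeshulam n (ENNReal.ofReal r)
            {ω : Finset (Fin n) → Bool | ω (σ₁ ∪ σ₂) = true ∧ ω (σ₃ ∪ σ₄) = true} := by
        have hsplit2 : ENNReal.ofReal (Real.exp (((n : ℝ) * r ^ 2 / 2 + 2)
            - (1 - Real.exp (-1)) * (r ^ 2 * (1 - r)) * ((n : ℝ) - 4 * d)))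
            = ENNReal.ofReal (Real.exp t) *
              ENNReal.ofReal (Real.exp (-((1 - Real.exp (-1)) * (r ^ 2 * (1 - r))
                * ((n : ℝ) - 4 * d)))) := by
          rw [← ENNReal.ofReal_mul (Real.exp_nonneg _), ← Real.exp_add]
          congr 2
          try (rw [ht]; ring)
          try ring
        rw [hsplit2]
        ring


set_option maxHeartbeats 2000000 in
/-- In `Y_d(n, n^{-α})` with `0 < α < 1/2`, for edges `σ₁ ∼ σ₂` and `σ₃ ∼ σ₄`, with
`S` the set of common neighbours of all four and
`Z = 1{σ₁∼σ₃, σ₁∼σ₄} + 1{σ₂∼σ₃, σ₂∼σ₄}`, for all large `n`,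
`P(W_{σ₁,σ₂} - |S| - Z ≤ n p_n²/2 and both edges present)
  ≤ exp(-Θ(n^{1-2α})) P(both edges present)`. -/
theorem common_neighbour_count_lower_bound (d : ℕ) (hd : 0 < d)
    (α : ℝ) (hα0 : 0 < α) (hα1 : α < 1 / 2) :
    ∃ C > (0 : ℝ), ∃ N : ℕ, ∀ n : ℕ, N ≤ n →
      ∀ σ₁ σ₂ σ₃ σ₄ : Finset (Fin n),
        σ₁.card = d → σ₂.card = d → σ₃.card = d → σ₄.card = d →
        σ₁ ≠ σ₂ → σ₃ ≠ σ₄ →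
        (σ₁ ∩ σ₂).card = d - 1 → (σ₃ ∩ σ₄).card = d - 1 →
        ({σ₁, σ₂} : Finset (Finset (Fin n))) ≠ {σ₃, σ₄} →
        (linialMeshulam n (ENNReal.ofReal ((n : ℝ) ^ (-α)))
          {ω | (ω (σ₁ ∪ σ₂) = true ∧ ω (σ₃ ∪ σ₄) = true) ∧
            ((Finset.univ.filter fun σ : Finset (Fin n) =>
                σ.card = d ∧ nbr n d ω σ σ₁ ∧ nbr n d ω σ σ₂).card : ℝ) -
              ((Finset.univ.filter fun σ : Finset (Fin n) =>
                σ.card = d ∧ nbr n d ω σ σ₁ ∧ nbr n d ω σ σ₂ ∧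
                  nbr n d ω σ σ₃ ∧ nbr n d ω σ σ₄).card : ℝ) -
              ((if nbr n d ω σ₁ σ₃ ∧ nbr n d ω σ₁ σ₄ then (1 : ℝ) else 0) +
                (if nbr n d ω σ₂ σ₃ ∧ nbr n d ω σ₂ σ₄ then (1 : ℝ) else 0)) ≤
            (n : ℝ) * ((n : ℝ) ^ (-α)) ^ 2 / 2}).toReal ≤
        Real.exp (-C * (n : ℝ) ^ (1 - 2 * α)) *
          (linialMeshulam n (ENNReal.ofReal ((n : ℝ) ^ (-α)))
            {ω | ω (σ₁ ∪ σ₂) = true ∧ ω (σ₃ ∪ σ₄) = true}).toReal := by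
    classical
  refine ⟨1/200, by norm_num, ?_⟩
  have ev1 : ∀ᶠ n : ℕ in Filter.atTop, ((n : ℝ)) ^ (-α) < 3/100 := by
    have h1 : Filter.Tendsto (fun n : ℕ => ((n : ℝ)) ^ (-α)) Filter.atTop (nhds 0) :=
      (tendsto_rpow_neg_atTop hα0).comp tendsto_natCast_atTop_atTop
    exact h1.eventually_lt_const (by norm_num)
  have ev2 : ∀ᶠ n : ℕ in Filter.atTop, (1000 : ℝ) ≤ ((n : ℝ)) ^ (1 - 2*α) := by
    have h2 : Filter.Tendsto (fun n : ℕ => ((n : ℝ)) ^ (1 - 2*α)) Filter.atTop Filter.atTop :=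
      (tendsto_rpow_atTop (by linarith)).comp tendsto_natCast_atTop_atTop
    exact h2.eventually_ge_atTop 1000
  have ev3 : ∀ᶠ n : ℕ in Filter.atTop, 134 * d + 1 ≤ n := Filter.eventually_ge_atTop _
  have ev4 : ∀ᶠ n : ℕ in Filter.atTop, 1 ≤ n := Filter.eventually_ge_atTop _
  obtain ⟨N, hN⟩ := Filter.eventually_atTop.mp ((ev1.and ev2).and (ev3.and ev4))
  refine ⟨N, ?_⟩
  intro n hn σ₁ σ₂ σ₃ σ₄ h₁ h₂ h₃ h₄ h12 h34 hK12 hK34 hpair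
  obtain ⟨⟨hr3, hx1000⟩, hn134, hn1⟩ := hN n hn
  haveI : IsProbabilityMeasure (linialMeshulam n (ENNReal.ofReal ((n : ℝ) ^ (-α)))) := by
    unfold linialMeshulam; infer_instance
  set r : ℝ := (n : ℝ) ^ (-α) with hr
  have hnpos : (0 : ℝ) < n := by exact_mod_cast hn1
  have hr0 : 0 < r := Real.rpow_pos_of_pos hnpos _
  have hr1 : r ≤ 1/2 := by linarith
  set x : ℝ := (n : ℝ) ^ (1 - 2*α) with hx
  have hxid : (n : ℝ) * r ^ 2 = x := by
    rw [hr, hx, ← Real.rpow_natCast ((n:ℝ) ^ (-α)) 2, ← Real.rpow_mul hnpos.le]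
    rw [show ((n:ℝ) ^ (1 - 2*α)) = (n:ℝ) ^ ((1 : ℝ) + (-α * 2)) by congr 1; ring]
    rw [Real.rpow_add hnpos, Real.rpow_one]
    norm_num
  have h4d : 4 * (d : ℝ) ≤ (3/100) * n := by
    have : (134 * d + 1 : ℝ) ≤ n := by exact_mod_cast hn134
    linarith
  have hθ6 : (6 : ℝ)/10 ≤ 1 - Real.exp (-1) := by
    have he : (2.7 : ℝ) ≤ Real.exp 1 := by
      have := Real.exp_one_gt_d9; linarith
    have hinv : Real.exp (-1) ≤ (2.7 : ℝ)⁻¹ := by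
      rw [Real.exp_neg]
      exact inv_anti₀ (by norm_num) he
    rw [show ((2.7 : ℝ))⁻¹ = 1/2.7 by norm_num] at hinv
    nlinarith
  have hθ1 : 1 - Real.exp (-1) ≤ 1 := by linarith [Real.exp_pos (-1)]
  -- the key numeric inequality
  have hnum : ((n : ℝ) * r ^ 2 / 2 + 2)
      - (1 - Real.exp (-1)) * (r ^ 2 * (1 - r)) * ((n : ℝ) - 4 * d)
      ≤ -(1/200) * x := by
    set θ : ℝ := 1 - Real.exp (-1) with hθ
    have e1 : (97/100) * x ≤ r^2 * ((n:ℝ) - 4*d) := by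
      have hmul : r^2 * (4*(d:ℝ)) ≤ r^2 * ((3/100)*n) :=
        mul_le_mul_of_nonneg_left h4d (sq_nonneg r)
      nlinarith [hxid]
    have e2 : (97/100 : ℝ) ≤ 1 - r := by linarith
    have hθ0 : (0:ℝ) ≤ θ := by linarith
    have hA : (6/10 : ℝ) * (97/100) ≤ θ * (1 - r) := by nlinarith
    have hB : ((6/10 : ℝ) * (97/100)) * ((97/100) * x) ≤ (θ * (1 - r)) * (r^2 * ((n:ℝ) - 4*d)) :=
      mul_le_mul hA e1 (by linarith) (by nlinarith)
    have hre : θ * (r ^ 2 * (1 - r)) * ((n : ℝ) - 4 * d)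
        = (θ * (1 - r)) * (r^2 * ((n:ℝ) - 4*d)) := by ring
    rw [hre]
    nlinarith [hxid]
  have hmain := main_est n d hd r hr0 hr1 σ₁ σ₂ σ₃ σ₄ h₁ h₂ h₃ h₄ h12 h34 hK12 hK34 hpair
  have hfin : (linialMeshulam n (ENNReal.ofReal r)
      {ω : Finset (Fin n) → Bool | ω (σ₁ ∪ σ₂) = true ∧ ω (σ₃ ∪ σ₄) = true}) ≠ ⊤ :=
    measure_ne_top _ _
  calc (linialMeshulam n (ENNReal.ofReal r)
      {ω : Finset (Fin n) → Bool | (ω (σ₁ ∪ σ₂) = true ∧ ω (σ₃ ∪ σ₄) = true) ∧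
        ((Finset.univ.filter fun σ : Finset (Fin n) =>
            σ.card = d ∧ nbr n d ω σ σ₁ ∧ nbr n d ω σ σ₂).card : ℝ) -
          ((Finset.univ.filter fun σ : Finset (Fin n) =>
            σ.card = d ∧ nbr n d ω σ σ₁ ∧ nbr n d ω σ σ₂ ∧
              nbr n d ω σ σ₃ ∧ nbr n d ω σ σ₄).card : ℝ) -
          ((if nbr n d ω σ₁ σ₃ ∧ nbr n d ω σ₁ σ₄ then (1 : ℝ) else 0) +
            (if nbr n d ω σ₂ σ₃ ∧ nbr n d ω σ₂ σ₄ then (1 : ℝ) else 0)) ≤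
        (n : ℝ) * r ^ 2 / 2}).toReal
      ≤ (ENNReal.ofReal (Real.exp (((n : ℝ) * r ^ 2 / 2 + 2)
          - (1 - Real.exp (-1)) * (r ^ 2 * (1 - r)) * ((n : ℝ) - 4 * d)))
        * linialMeshulam n (ENNReal.ofReal r)
            {ω : Finset (Fin n) → Bool |
              ω (σ₁ ∪ σ₂) = true ∧ ω (σ₃ ∪ σ₄) = true}).toReal :=
        ENNReal.toReal_mono (ENNReal.mul_ne_top ENNReal.ofReal_ne_top hfin) hmain
    _ = Real.exp (((n : ℝ) * r ^ 2 / 2 + 2)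
          - (1 - Real.exp (-1)) * (r ^ 2 * (1 - r)) * ((n : ℝ) - 4 * d))
        * (linialMeshulam n (ENNReal.ofReal r)
            {ω : Finset (Fin n) → Bool |
              ω (σ₁ ∪ σ₂) = true ∧ ω (σ₃ ∪ σ₄) = true}).toReal := by
        rw [ENNReal.toReal_mul, ENNReal.toReal_ofReal (Real.exp_nonneg _)]
    _ ≤ Real.exp (-(1/200) * x)
        * (linialMeshulam n (ENNReal.ofReal r)
            {ω : Finset (Fin n) → Bool |
              ω (σ₁ ∪ σ₂) = true ∧ ω (σ₃ ∪ σ₄) = true}).toReal := by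
        apply mul_le_mul_of_nonneg_right _ ENNReal.toReal_nonneg
        apply Real.exp_le_exp.mpr
        linarith [hnum]
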